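/- Let x be a nilpotent endomorphism of an n-dimensional vector space V over a field k, with Jordan basis {v_{ij} : 1 ≤ i ≤ l, 1 ≤ j ≤ λ_i} (so x v_{i,1} = 0 and x v_{i,j} = v_{i,j−1} for j > 1). An endomorphism y of V, with coefficients c_{ij}^{rs}(y) defined by y v_{ij} = Σ_{r,s} c_{ij}^{rs}(y) v_{rs}, commutes with x if and only if: (i) c_{ij}^{rs}(y) = c_{i,j−m}^{r,s−m}(y) for all m < s ≤ λ_r and m < j ≤ λ_i; (ii) c_{ij}^{rs}(y) = 0 if s > j; and (iii) c_{ij}^{r λ_r}(y) = 0 if j ≠ λ_i. -/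

import Mathlib

/-- with `x` a nilpotent endomorphism with Jordan basis `{v_{ij}}`
(0-indexed positions: `x v_{i,0} = 0`, `x v_{i,j} = v_{i,j-1}` for `j > 0`), an
endomorphism `y` with coefficients `c (i,j) (r,s) = c_{ij}^{rs}(y)` commutes with `x`
iff (i) `c_{ij}^{rs} = c_{i,j-m}^{r,s-m}` for `m ≤ s`, `m ≤ j`; (ii) `c_{ij}^{rs} = 0`
when `s > j`; (iii) `c_{ij}^{r,λ_r} = 0` when `j` is not the last position of row `i`. -/
theorem stmt4 (k : Type*) [Field k] (V : Type*) [AddCommGroup V] [Module k V]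
    (x y : Module.End k V) (l : ℕ) (lam : Fin l → ℕ)
    (hanti : Antitone lam) (hpos : ∀ i, 0 < lam i)
    (B : Module.Basis (Σ i : Fin l, Fin (lam i)) k V)
    (hB : ∀ (i : Fin l) (j : Fin (lam i)),
      x (B ⟨i, j⟩) =
        if h : 0 < (j : ℕ) then
          B ⟨i, ⟨(j : ℕ) - 1, Nat.lt_of_le_of_lt (Nat.sub_le _ _) j.isLt⟩⟩
        else 0)
    (c : (Σ i : Fin l, Fin (lam i)) → (Σ i : Fin l, Fin (lam i)) → k)
    (hc : ∀ a b, c a b = B.repr (y (B a)) b) :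
    x * y = y * x ↔
      ((∀ (i r : Fin l) (j : Fin (lam i)) (s : Fin (lam r)) (m : ℕ)
          (hm₁ : m ≤ (s : ℕ)) (hm₂ : m ≤ (j : ℕ)),
          c ⟨i, j⟩ ⟨r, s⟩ =
            c ⟨i, ⟨(j : ℕ) - m, Nat.lt_of_le_of_lt (Nat.sub_le _ _) j.isLt⟩⟩
              ⟨r, ⟨(s : ℕ) - m, Nat.lt_of_le_of_lt (Nat.sub_le _ _) s.isLt⟩⟩) ∧
       (∀ (i r : Fin l) (j : Fin (lam i)) (s : Fin (lam r)),
          (j : ℕ) < (s : ℕ) → c ⟨i, j⟩ ⟨r, s⟩ = 0) ∧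
       (∀ (i r : Fin l) (j : Fin (lam i)),
          (j : ℕ) ≠ lam i - 1 →
          c ⟨i, j⟩ ⟨r, ⟨lam r - 1, Nat.sub_lt (hpos r) one_pos⟩⟩ = 0)) := by
  classical
  -- equality criterion for sigma indices
  have sig : ∀ (i r : Fin l) (a : Fin (lam i)) (b : Fin (lam r)),
      ((⟨i, a⟩ : Σ i : Fin l, Fin (lam i)) = ⟨r, b⟩) ↔ (i = r ∧ (a : ℕ) = (b : ℕ)) := by
    intro i r a b
    constructor
    · intro he
      injection he with h1 h2
      subst h1
      exact ⟨rfl, congrArg Fin.val (eq_of_heq h2)⟩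
    · rintro ⟨rfl, h2⟩
      exact congrArg (Sigma.mk i) (Fin.ext h2)
  -- congruence helper
  have ceq : ∀ (i r : Fin l) (j j' : Fin (lam i)) (s s' : Fin (lam r)),
      (j : ℕ) = (j' : ℕ) → (s : ℕ) = (s' : ℕ) → c ⟨i, j⟩ ⟨r, s⟩ = c ⟨i, j'⟩ ⟨r, s'⟩ := by
    intro i r j j' s s' h1 h2
    rw [Fin.ext h1, Fin.ext h2]
  -- coefficient extraction for x
  have hx : ∀ (w : V) (r : Fin l) (t : Fin (lam r)),
      B.repr (x w) ⟨r, t⟩ =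
        if h : (t : ℕ) + 1 < lam r then B.repr w ⟨r, ⟨(t : ℕ) + 1, h⟩⟩ else 0 := by
    intro w r t
    by_cases h : (t : ℕ) + 1 < lam r
    · rw [dif_pos h]
      have hmaps :
          (Finsupp.lapply (⟨r, t⟩ : Σ i : Fin l, Fin (lam i))) ∘ₗ
              (B.repr.toLinearMap ∘ₗ x)
            = (Finsupp.lapply (⟨r, ⟨(t : ℕ) + 1, h⟩⟩ : Σ i : Fin l, Fin (lam i))) ∘ₗ
                B.repr.toLinearMap := by
        apply B.ext
        rintro ⟨i, j⟩
        simp only [LinearMap.comp_apply, LinearEquiv.coe_coe, Finsupp.lapply_apply]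
        rw [hB, Module.Basis.repr_self_apply]
        by_cases hj : 0 < (j : ℕ)
        · rw [dif_pos hj, Module.Basis.repr_self_apply]
          simp only [sig, Fin.val_mk]
          split_ifs with hA hB' hB'
          · rfl
          · obtain ⟨rfl, e⟩ := hA
            exact absurd ⟨rfl, by omega⟩ hB'
          · obtain ⟨rfl, e⟩ := hB'
            exact absurd ⟨rfl, by omega⟩ hA
          · rfl
        · rw [dif_neg hj, map_zero, Finsupp.coe_zero, Pi.zero_apply]
          simp only [sig, Fin.val_mk]
          rw [if_neg]
          rintro ⟨rfl, e⟩
          omega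
      have := LinearMap.congr_fun hmaps w
      simpa using this
    · rw [dif_neg h]
      have hmaps :
          (Finsupp.lapply (⟨r, t⟩ : Σ i : Fin l, Fin (lam i))) ∘ₗ
              (B.repr.toLinearMap ∘ₗ x)
            = (0 : V →ₗ[k] k) := by
        apply B.ext
        rintro ⟨i, j⟩
        simp only [LinearMap.comp_apply, LinearEquiv.coe_coe, Finsupp.lapply_apply,
          LinearMap.zero_apply]
        rw [hB]
        by_cases hj : 0 < (j : ℕ)
        · rw [dif_pos hj, Module.Basis.repr_self_apply]
          simp only [sig, Fin.val_mk]
          rw [if_neg]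
          rintro ⟨rfl, e⟩
          have := j.isLt
          omega
        · rw [dif_neg hj, map_zero, Finsupp.coe_zero, Pi.zero_apply]
      have := LinearMap.congr_fun hmaps w
      simpa using this
  -- the two sides of the commutation relation, coefficientwise
  have eq1 : ∀ (i : Fin l) (j : Fin (lam i)) (r : Fin l) (t : Fin (lam r)),
      B.repr ((x * y) (B ⟨i, j⟩)) ⟨r, t⟩ =
        if h : (t : ℕ) + 1 < lam r then c ⟨i, j⟩ ⟨r, ⟨(t : ℕ) + 1, h⟩⟩ else 0 := by
    intro i j r t
    rw [Module.End.mul_apply, hx]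
    simp only [hc]
  have eq2 : ∀ (i : Fin l) (j : Fin (lam i)) (r : Fin l) (t : Fin (lam r)),
      B.repr ((y * x) (B ⟨i, j⟩)) ⟨r, t⟩ =
        if _ : 0 < (j : ℕ) then
          c ⟨i, ⟨(j : ℕ) - 1, Nat.lt_of_le_of_lt (Nat.sub_le _ _) j.isLt⟩⟩ ⟨r, t⟩
        else 0 := by
    intro i j r t
    rw [Module.End.mul_apply, hB]
    by_cases hj : 0 < (j : ℕ)
    · rw [dif_pos hj, dif_pos hj, hc]
    · rw [dif_neg hj, dif_neg hj, map_zero, map_zero, Finsupp.coe_zero, Pi.zero_apply]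
  have key : x * y = y * x ↔
      ∀ (i : Fin l) (j : Fin (lam i)) (r : Fin l) (t : Fin (lam r)),
        (if h : (t : ℕ) + 1 < lam r then c ⟨i, j⟩ ⟨r, ⟨(t : ℕ) + 1, h⟩⟩ else 0)
          = (if _ : 0 < (j : ℕ) then
              c ⟨i, ⟨(j : ℕ) - 1, Nat.lt_of_le_of_lt (Nat.sub_le _ _) j.isLt⟩⟩ ⟨r, t⟩
            else 0) := by
    constructor
    · intro hcomm i j r t
      rw [← eq1, ← eq2, hcomm]
    · intro H
      apply B.ext
      rintro ⟨i, j⟩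
      refine B.ext_elem fun e => ?_
      obtain ⟨r, t⟩ := e
      rw [eq1, eq2]
      exact H i j r t
  rw [key]
  constructor
  · intro P
    -- one-step shift
    have step : ∀ (i r : Fin l) (j : Fin (lam i)) (s : Fin (lam r)),
        0 < (j : ℕ) → 0 < (s : ℕ) →
        c ⟨i, j⟩ ⟨r, s⟩ =
          c ⟨i, ⟨(j : ℕ) - 1, Nat.lt_of_le_of_lt (Nat.sub_le _ _) j.isLt⟩⟩
            ⟨r, ⟨(s : ℕ) - 1, Nat.lt_of_le_of_lt (Nat.sub_le _ _) s.isLt⟩⟩ := by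
      intro i r j s hj hs
      have hsl := s.isLt
      have hP := P i j r ⟨(s : ℕ) - 1, by omega⟩
      rw [dif_pos (by simp only [Fin.val_mk] <;> omega : ((⟨(s : ℕ) - 1, by omega⟩ : Fin (lam r)) : ℕ) + 1 < lam r),
        dif_pos hj] at hP
      exact (ceq i r j j s ⟨(s : ℕ) - 1 + 1, by omega⟩ rfl
        (by simp only [Fin.val_mk] <;> omega)).trans
        (hP.trans (ceq i r _ _ _ _ rfl (by simp only [Fin.val_mk] <;> omega)))
    -- condition (i)
    have cond1 : ∀ (i r : Fin l) (j : Fin (lam i)) (s : Fin (lam r)) (m : ℕ),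
        m ≤ (s : ℕ) → m ≤ (j : ℕ) →
        c ⟨i, j⟩ ⟨r, s⟩ =
          c ⟨i, ⟨(j : ℕ) - m, Nat.lt_of_le_of_lt (Nat.sub_le _ _) j.isLt⟩⟩
            ⟨r, ⟨(s : ℕ) - m, Nat.lt_of_le_of_lt (Nat.sub_le _ _) s.isLt⟩⟩ := by
      intro i r j s m
      induction m with
      | zero =>
        intro _ _
        exact ceq i r _ _ _ _ (by simp only [Fin.val_mk] <;> omega)
          (by simp only [Fin.val_mk] <;> omega)
      | succ n ih =>
        intro hm1 hm2
        calc c ⟨i, j⟩ ⟨r, s⟩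
            = c ⟨i, ⟨(j : ℕ) - n, Nat.lt_of_le_of_lt (Nat.sub_le _ _) j.isLt⟩⟩
                ⟨r, ⟨(s : ℕ) - n, Nat.lt_of_le_of_lt (Nat.sub_le _ _) s.isLt⟩⟩ :=
              ih (by omega) (by omega)
          _ = c ⟨i, ⟨(j : ℕ) - n - 1, _⟩⟩ ⟨r, ⟨(s : ℕ) - n - 1, _⟩⟩ :=
              step i r _ _ (by simp only [Fin.val_mk] <;> omega)
                (by simp only [Fin.val_mk] <;> omega)
          _ = c ⟨i, ⟨(j : ℕ) - (n + 1), Nat.lt_of_le_of_lt (Nat.sub_le _ _) j.isLt⟩⟩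
                ⟨r, ⟨(s : ℕ) - (n + 1), Nat.lt_of_le_of_lt (Nat.sub_le _ _) s.isLt⟩⟩ :=
              ceq i r _ _ _ _ (by simp only [Fin.val_mk] <;> omega)
                (by simp only [Fin.val_mk] <;> omega)
    -- base case for (ii)
    have base : ∀ (i r : Fin l) (j : Fin (lam i)) (s : Fin (lam r)),
        (j : ℕ) = 0 → 0 < (s : ℕ) → c ⟨i, j⟩ ⟨r, s⟩ = 0 := by
      intro i r j s hj hs
      have hsl := s.isLt
      have hP := P i j r ⟨(s : ℕ) - 1, by omega⟩
      rw [dif_pos (by simp only [Fin.val_mk] <;> omega : ((⟨(s : ℕ) - 1, by omega⟩ : Fin (lam r)) : ℕ) + 1 < lam r),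
        dif_neg (by omega)] at hP
      exact (ceq i r j j s ⟨(s : ℕ) - 1 + 1, by omega⟩ rfl
        (by simp only [Fin.val_mk] <;> omega)).trans hP
    refine ⟨cond1, ?_, ?_⟩
    · intro i r j s hjs
      have h1 := cond1 i r j s (j : ℕ) (by omega) le_rfl
      rw [h1]
      exact base i r _ _ (by simp only [Fin.val_mk] <;> omega)
        (by simp only [Fin.val_mk] <;> omega)
    · intro i r j hj
      have hjl := j.isLt
      have hrl := hpos r
      have hP := P i ⟨(j : ℕ) + 1, by omega⟩ r ⟨lam r - 1, Nat.sub_lt (hpos r) one_pos⟩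
      rw [dif_neg (by simp only [Fin.val_mk] <;> omega),
        dif_pos (by simp only [Fin.val_mk] <;> omega)] at hP
      exact (ceq i r j ⟨(j : ℕ) + 1 - 1, by omega⟩ _ _
        (by simp only [Fin.val_mk] <;> omega) rfl).trans hP.symm
  · rintro ⟨h1, h2, h3⟩ i j r t
    have htl := t.isLt
    have hjl := j.isLt
    by_cases h : (t : ℕ) + 1 < lam r
    · rw [dif_pos h]
      by_cases hj : 0 < (j : ℕ)
      · rw [dif_pos hj]
        by_cases hle : (t : ℕ) + 1 ≤ (j : ℕ)
        · exact (h1 i r j ⟨(t : ℕ) + 1, h⟩ 1 (by simp only [Fin.val_mk] <;> omega)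
            (by omega)).trans
            (ceq i r _ _ _ _ rfl (by simp only [Fin.val_mk] <;> omega))
        · rw [h2 i r j ⟨(t : ℕ) + 1, h⟩ (by simp only [Fin.val_mk] <;> omega),
            h2 i r ⟨(j : ℕ) - 1, Nat.lt_of_le_of_lt (Nat.sub_le _ _) j.isLt⟩ t
              (by simp only [Fin.val_mk] <;> omega)]
      · rw [dif_neg hj]
        exact h2 i r j ⟨(t : ℕ) + 1, h⟩ (by simp only [Fin.val_mk] <;> omega)
    · rw [dif_neg h]
      by_cases hj : 0 < (j : ℕ)
      · rw [dif_pos hj]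
        have h0 := h3 i r ⟨(j : ℕ) - 1, Nat.lt_of_le_of_lt (Nat.sub_le _ _) j.isLt⟩
          (by simp only [Fin.val_mk] <;> omega)
        exact ((ceq i r _ _ t ⟨lam r - 1, Nat.sub_lt (hpos r) one_pos⟩ rfl
          (by simp only [Fin.val_mk] <;> omega)).trans h0).symm
      · rw [dif_neg hj]
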